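/- Meta convergence theorem (strongly convex case): Let F = f + Σ_k Ψ_k with Γ ≥ L_max, and suppose there are nonnegative functions A⁺(t), A⁻(t) with A⁺(1) = 0, H(t) := F(x^t) + A⁺(t) − A⁻(t), such that for constants α, β > 0 and all t ≥ 1: H(t) − H(t+1) ≥ (α/n)·Σ_{k=1}^n Ŵ_k(∇_k f(x^t), x_k^t) + (β/n)·A⁺(t). If F is strongly convex with parameter μ_F and f is strongly convex with parameter μ_f ≤ Γ, then for all T ≥ 0: H(T+1) ≤ [1 − min{ (α/(2n))·μ_F/(μ_F + Γ − μ_f), β/(2n) }]^T · F(x¹). -/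

import Mathlib

open InnerProductSpace Filter Set Topology

lemma strongConvexOn_gradient_ineq {E : Type*} [NormedAddCommGroup E] [InnerProductSpace ℝ E]
    [CompleteSpace E] {f : E → ℝ} {μ : ℝ} (hsc : StrongConvexOn Set.univ μ f)
    {g x : E} (hg : HasGradientAt f g x) (y : E) :
    f x + inner ℝ g (y - x) + μ / 2 * ‖y - x‖ ^ 2 ≤ f y := by
  set C : ℝ := μ / 2 * ‖y - x‖ ^ 2 with hC
  have hf' : HasFDerivAt f (InnerProductSpace.toDual ℝ E g) x :=
    hasGradientAt_iff_hasFDerivAt.mp hg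
  have haff : HasDerivAt (fun a : ℝ => x + a • (y - x)) (y - x) 0 := by
    simpa using ((hasDerivAt_id (0:ℝ)).smul_const (y - x)).const_add x
  have hcomp : HasDerivAt (fun a : ℝ => f (x + a • (y - x))) (inner ℝ g (y - x) : ℝ) 0 := by
    have hx0 : HasFDerivAt f (InnerProductSpace.toDual ℝ E g) (x + (0:ℝ) • (y - x)) := by
      simpa using hf'
    have := hx0.comp_hasDerivAt (0:ℝ) haff
    exact this
  set φ : ℝ → ℝ := fun a => f (x + a • (y - x)) with hφ
  have hslope : Tendsto (slope φ 0) (𝓝[>] (0:ℝ)) (𝓝 (inner ℝ g (y - x) : ℝ)) :=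
    (hasDerivAt_iff_tendsto_slope.mp hcomp).mono_left
      (nhdsWithin_mono _ (fun a ha => ne_of_gt ha))
  have hψ : Tendsto (fun a : ℝ => f y - f x - (1 - a) * C) (𝓝[>] (0:ℝ))
      (𝓝 (f y - f x - C)) := by
    have : Tendsto (fun a : ℝ => f y - f x - (1 - a) * C) (𝓝 (0:ℝ))
        (𝓝 (f y - f x - (1 - 0) * C)) :=
      (tendsto_const_nhds.sub (((tendsto_const_nhds.sub tendsto_id)).mul tendsto_const_nhds))
    simpa using this.mono_left nhdsWithin_le_nhds
  have hev : (slope φ 0) ≤ᶠ[𝓝[>] (0:ℝ)] (fun a => f y - f x - (1 - a) * C) := by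
    filter_upwards [Ioo_mem_nhdsGT (by norm_num : (0:ℝ) < 1)] with a ha
    have ha0 : 0 < a := ha.1
    have ha1 : a < 1 := ha.2
    have hcvx := hsc.2 (mem_univ x) (mem_univ y) (by linarith : (0:ℝ) ≤ 1 - a)
      (le_of_lt ha0) (by ring)
    have hxy : (1 - a) • x + a • y = x + a • (y - x) := by module
    have hnorm : ‖x - y‖ = ‖y - x‖ := norm_sub_rev x y
    rw [hxy] at hcvx
    have hφa : φ a ≤ (1 - a) * f x + a * f y - (1 - a) * a * C := by
      simpa [hC, hnorm, smul_eq_mul] using hcvx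
    have hφ0 : φ 0 = f x := by simp [hφ]
    rw [slope_def_field]
    have : (φ a - φ 0) / a ≤ f y - f x - (1 - a) * C := by
      rw [div_le_iff₀ ha0, hφ0]
      nlinarith
    simpa using this
  have := le_of_tendsto_of_tendsto hslope hψ hev
  linarith

theorem meta_convergence_strongly_convex
    {n : ℕ} (hn : 0 < n)
    (f F : EuclideanSpace ℝ (Fin n) → ℝ)
    (Ψ : Fin n → ℝ → ℝ) (hΨ : ∀ k, ConvexOn ℝ Set.univ (Ψ k))
    (hFdef : ∀ y, F y = f y + ∑ k, Ψ k (y k))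
    (hFnonneg : ∀ y, 0 ≤ F y) (hFzero : ∃ y, F y = 0)
    (gradf : EuclideanSpace ℝ (Fin n) → EuclideanSpace ℝ (Fin n))
    (hgrad : ∀ y, HasGradientAt f (gradf y) y)
    (Γ Lmax μF μf : ℝ) (hΓpos : 0 < Γ) (hΓ : Lmax ≤ Γ) (hμfΓ : μf ≤ Γ)
    (hμF : 0 < μF) (hμf : 0 < μf)
    (hsmooth : ∀ (y : EuclideanSpace ℝ (Fin n)) (k : Fin n) (r : ℝ),
      f (y + EuclideanSpace.single k r) ≤ f y + gradf y k * r + Lmax / 2 * r ^ 2)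
    (hFsc : StrongConvexOn Set.univ μF F)
    (hfsc : StrongConvexOn Set.univ μf f)
    (dW : Fin n → ℝ → ℝ → ℝ)
    (hdW : ∀ (k : Fin n) (g z d : ℝ),
      g * dW k g z + Γ * (dW k g z) ^ 2 / 2 + Ψ k (z + dW k g z) - Ψ k z
        ≤ g * d + Γ * d ^ 2 / 2 + Ψ k (z + d) - Ψ k z)
    (x : ℕ → EuclideanSpace ℝ (Fin n))
    (Ap Am : ℕ → ℝ) (hAp : ∀ t, 0 ≤ Ap t) (hAm : ∀ t, 0 ≤ Am t) (hAp1 : Ap 1 = 0)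
    (H : ℕ → ℝ) (hHdef : ∀ t, H t = F (x t) + Ap t - Am t)
    (α β : ℝ) (hα : 0 < α) (hβ : 0 < β)
    (ha : ∀ t ≥ 1, 0 ≤ H t)
    (hb : ∀ t ≥ 1, H (t + 1) ≤ H t)
    (hc : ∀ t ≥ 1, H t - H (t + 1) ≥
      α / n * (∑ k,
        -(gradf (x t) k * dW k (gradf (x t) k) (x t k)
          + Γ * (dW k (gradf (x t) k) (x t k)) ^ 2 / 2
          + Ψ k (x t k + dW k (gradf (x t) k) (x t k)) - Ψ k (x t k)))
      + β / n * Ap t) :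
    ∀ T : ℕ, H (T + 1) ≤
      (1 - min (α / (2 * n) * (μF / (μF + Γ - μf))) (β / (2 * n))) ^ T * F (x 1) := by
  obtain ⟨xs, hxs⟩ := hFzero
  have hn' : (0:ℝ) < (n:ℝ) := by exact_mod_cast hn
  set lam : ℝ := μF / (μF + Γ - μf) with hlam
  have hden : 0 < μF + Γ - μf := by linarith
  have hlam0 : 0 < lam := div_pos hμF hden
  have hlam1 : lam ≤ 1 := by rw [hlam, div_le_one hden]; linarith
  have hlameq : lam * (μF + Γ - μf) = μF := div_mul_cancel₀ _ (ne_of_gt hden)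
  -- key lemma: the sum of W-hats dominates lam * F u
  have key : ∀ u : EuclideanSpace ℝ (Fin n),
      lam * F u ≤ ∑ k, -(gradf u k * dW k (gradf u k) (u k)
        + Γ * (dW k (gradf u k) (u k)) ^ 2 / 2
        + Ψ k (u k + dW k (gradf u k) (u k)) - Ψ k (u k)) := by
    intro u
    set g : EuclideanSpace ℝ (Fin n) := gradf u with hg
    set w : EuclideanSpace ℝ (Fin n) := (1 - lam) • u + lam • xs with hw
    have hwk : ∀ k, w k = u k + lam * (xs k - u k) := by
      intro k
      simp only [hw, PiLp.add_apply, PiLp.smul_apply, smul_eq_mul]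
      ring
    set R2 : ℝ := ‖xs - u‖ ^ 2 with hR2
    have hR : R2 = ∑ k, (xs k - u k) ^ 2 := by
      rw [hR2, EuclideanSpace.norm_eq, Real.sq_sqrt (by positivity)]
      simp [Real.norm_eq_abs, sq_abs]
    set I : ℝ := inner ℝ g (xs - u) with hI
    have hIsum : I = ∑ k, g k * (xs k - u k) := by
      simp [hI, PiLp.inner_apply, RCLike.inner_apply, PiLp.sub_apply]
      exact Finset.sum_congr rfl fun k _ => mul_comm _ _
    -- step A: optimality of dW
    have hA : ∑ k, (g k * dW k (g k) (u k) + Γ * (dW k (g k) (u k)) ^ 2 / 2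
          + Ψ k (u k + dW k (g k) (u k)) - Ψ k (u k))
        ≤ ∑ k, (g k * (lam * (xs k - u k)) + Γ * (lam * (xs k - u k)) ^ 2 / 2
          + Ψ k (u k + lam * (xs k - u k)) - Ψ k (u k)) :=
      Finset.sum_le_sum fun k _ => hdW k (g k) (u k) (lam * (xs k - u k))
    -- the RHS of hA rewritten
    have hsum : ∑ k, (g k * (lam * (xs k - u k)) + Γ * (lam * (xs k - u k)) ^ 2 / 2
          + Ψ k (u k + lam * (xs k - u k)) - Ψ k (u k))
        = lam * I + Γ * lam ^ 2 * R2 / 2 + ((F w - f w) - (F u - f u)) := by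
      have e1 : ∑ k, g k * (lam * (xs k - u k)) = lam * I := by
        rw [hIsum, Finset.mul_sum]
        exact Finset.sum_congr rfl fun k _ => by ring
      have e2 : ∑ k, Γ * (lam * (xs k - u k)) ^ 2 / 2 = Γ * lam ^ 2 * R2 / 2 := by
        rw [hR, Finset.mul_sum]
        rw [Finset.sum_div]
        exact Finset.sum_congr rfl fun k _ => by ring
      have e3 : ∑ k, Ψ k (u k + lam * (xs k - u k)) = F w - f w := by
        rw [hFdef w]
        have : ∑ k, Ψ k (w k) = ∑ k, Ψ k (u k + lam * (xs k - u k)) :=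
          Finset.sum_congr rfl fun k _ => by rw [hwk k]
        linarith [this]
      have e4 : ∑ k, Ψ k (u k) = F u - f u := by rw [hFdef u]; ring
      rw [Finset.sum_sub_distrib, Finset.sum_add_distrib, Finset.sum_add_distrib, e1, e2, e3, e4]
      ring
    -- F strong convexity at u, xs
    have hFw : F w ≤ (1 - lam) * F u - (1 - lam) * lam * (μF / 2 * R2) := by
      have h := hFsc.2 (Set.mem_univ u) (Set.mem_univ xs)
        (by linarith : (0:ℝ) ≤ 1 - lam) hlam0.le (by ring)
      rw [norm_sub_rev u xs] at h
      simpa [hxs, smul_eq_mul, hR2] using h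
    -- f gradient inequality at u, evaluated at w
    have hfw : f u + lam * I + μf / 2 * (lam ^ 2 * R2) ≤ f w := by
      have h := strongConvexOn_gradient_ineq hfsc (hgrad u) w
      have hwu : w - u = lam • (xs - u) := by rw [hw]; module
      rw [hwu] at h
      have hin : (inner ℝ g (lam • (xs - u)) : ℝ) = lam * I := by
        rw [hI]; exact real_inner_smul_right g (xs - u) lam
      have hnr : ‖lam • (xs - u)‖ ^ 2 = lam ^ 2 * R2 := by
        rw [norm_smul, mul_pow, Real.norm_eq_abs, sq_abs, hR2]
      rw [hin, hnr] at h
      exact h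
    -- combine
    have hz : (lam * Γ + lam * μF - lam * μf - μF) * (lam * R2) = 0 := by
      have : lam * Γ + lam * μF - lam * μf - μF = 0 := by linarith [hlameq]; 
      rw [this]; ring
    rw [Finset.sum_neg_distrib]
    have hfinal : ∑ k, (g k * dW k (g k) (u k) + Γ * (dW k (g k) (u k)) ^ 2 / 2
          + Ψ k (u k + dW k (g k) (u k)) - Ψ k (u k)) ≤ -(lam * F u) := by
      rw [hsum] at hA
      linarith [hA, hFw, hfw, hz]
    linarith
  -- per-step contraction
  set ρ : ℝ := min (α / (2 * n) * lam) (β / (2 * n)) with hρ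
  have hρ0 : 0 < ρ := lt_min (by positivity) (by positivity)
  have hρ1 : ρ ≤ α / (2 * n) * lam := min_le_left _ _
  have hρ2 : ρ ≤ β / (2 * n) := min_le_right _ _
  have step : ∀ t : ℕ, 1 ≤ t → H (t + 1) ≤ (1 - ρ) * H t := by
    intro t ht
    set S : ℝ := (∑ k,
        -(gradf (x t) k * dW k (gradf (x t) k) (x t k)
          + Γ * (dW k (gradf (x t) k) (x t k)) ^ 2 / 2
          + Ψ k (x t k + dW k (gradf (x t) k) (x t k)) - Ψ k (x t k))) with hSdef
    have hct := hc t ht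
    have hS := key (x t)
    have e1 : α / n * (lam * F (x t)) ≤ α / n * S :=
      mul_le_mul_of_nonneg_left hS (by positivity)
    have eF : ρ * F (x t) ≤ (α / (2 * n) * lam) * F (x t) :=
      mul_le_mul_of_nonneg_right hρ1 (hFnonneg (x t))
    have eA : ρ * Ap t ≤ (β / (2 * n)) * Ap t :=
      mul_le_mul_of_nonneg_right hρ2 (hAp t)
    have e3 : ρ * H t ≤ ρ * (F (x t) + Ap t) := by
      apply mul_le_mul_of_nonneg_left _ hρ0.le
      rw [hHdef t]; linarith [hAm t]
    have e4 : 0 ≤ ρ * H t := mul_nonneg hρ0.le (ha t ht)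
    have expand : α / n * (lam * F (x t)) = 2 * ((α / (2 * n) * lam) * F (x t)) := by
      field_simp
    have expand2 : β / n * Ap t = 2 * ((β / (2 * n)) * Ap t) := by
      field_simp
    linarith [hct, e1, eF, eA, e3, e4]
  by_cases hρle : ρ ≤ 1
  · intro T
    induction T with
    | zero =>
      simp only [pow_zero, one_mul]
      rw [hHdef 1, hAp1]
      linarith [hAm 1]
    | succ T ih =>
      have h1 : H (T + 1 + 1) ≤ (1 - ρ) * H (T + 1) := step (T + 1) (Nat.le_add_left 1 T)
      have h2 : (1 - ρ) * H (T + 1) ≤ (1 - ρ) * ((1 - ρ) ^ T * F (x 1)) :=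
        mul_le_mul_of_nonneg_left ih (by linarith)
      calc H (T + 1 + 1) ≤ (1 - ρ) * ((1 - ρ) ^ T * F (x 1)) := le_trans h1 h2
        _ = (1 - ρ) ^ (T + 1) * F (x 1) := by rw [pow_succ]; ring
  · -- ρ > 1 : then F (x 1) = 0 and H stays ≤ 0
    push_neg at hρle
    have hgt : 1 < α / (2 * n) * lam := lt_of_lt_of_le hρle hρ1
    have hF1 : F (x 1) = 0 := by
      have hc1 := hc 1 le_rfl
      set S : ℝ := (∑ k,
          -(gradf (x 1) k * dW k (gradf (x 1) k) (x 1 k)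
            + Γ * (dW k (gradf (x 1) k) (x 1 k)) ^ 2 / 2
            + Ψ k (x 1 k + dW k (gradf (x 1) k) (x 1 k)) - Ψ k (x 1 k))) with hSdef
      have hS := key (x 1)
      have e1 : α / n * (lam * F (x 1)) ≤ α / n * S :=
        mul_le_mul_of_nonneg_left hS (by positivity)
      have h2 : 2 * F (x 1) ≤ (α / n * lam) * F (x 1) := by
        apply mul_le_mul_of_nonneg_right _ (hFnonneg (x 1))
        have : α / n * lam = 2 * (α / (2 * n) * lam) := by field_simp
        rw [this]; linarith
      have hH1 : H 1 = F (x 1) - Am 1 := by rw [hHdef 1, hAp1]; ring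
      have hH2 : 0 ≤ H (1 + 1) := ha 2 (by norm_num)
      have hApz : β / n * Ap 1 = 0 := by rw [hAp1]; ring
      have : F (x 1) ≤ 0 := by linarith [hc1, e1, h2, hAm 1, hApz]
      linarith [hFnonneg (x 1)]
    intro T
    have hle0 : ∀ T : ℕ, H (T + 1) ≤ 0 := by
      intro T
      induction T with
      | zero => rw [hHdef 1, hAp1, hF1]; linarith [hAm 1]
      | succ T ih => exact le_trans (hb (T + 1) (Nat.le_add_left 1 T)) ih
    rw [hF1, mul_zero]
    exact hle0 T
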